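/- Let n ∈ ℕ, N = 2^n, let G be the n-fold Kronecker power over 𝔽₂ of the kernel [[1,0],[1,1]], and fix a bit position ℓ < n. For all j, c ∈ {0,…,N−1}: (i) if the ℓ-th binary digit of c is 1 and the ℓ-th binary digit of j is 0, then G[j,c] = 0; (ii) if the ℓ-th binary digits of c and j are both 1, then G[j,c] = G[j, c − 2^ℓ]; (iii) if the ℓ-th binary digit of c is 0, then G[j,c] = G[j XOR 2^ℓ, c], i.e., the entries of row j in columns whose ℓ-th digit is 0 do not depend on the ℓ-th digit of j. -/

import Mathlib

open Finset

/-- The polar kernel `G₂ = [[1,0],[1,1]]` over `𝔽₂`. -/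
def polarKernel : Matrix (Fin 2) (Fin 2) (ZMod 2) := !![1, 0; 1, 1]

/-- The `n`-fold Kronecker power of the polar kernel, an `N × N` matrix over `𝔽₂`
with `N = 2 ^ n`, rows and columns indexed by `0, …, N-1`. -/
def polarG : (n : ℕ) → Matrix (Fin (2 ^ n)) (Fin (2 ^ n)) (ZMod 2)
  | 0 => 1
  | n + 1 =>
    Matrix.reindex (finCongr (by ring)) (finCongr (by ring))
      (Matrix.reindex finProdFinEquiv finProdFinEquiv
        (Matrix.kroneckerMap (· * ·) polarKernel (polarG n)))

/-- Row `g_t` of the polar matrix, as a vector in `𝔽₂^N`. -/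
def row (n : ℕ) (t : Fin (2 ^ n)) : Fin (2 ^ n) → ZMod 2 := fun c => polarG n t c

/-- Hamming weight `i₁(v)`: the number of nonzero coordinates of `v`. -/
def hammingWeight {N : ℕ} (v : Fin N → ZMod 2) : ℕ :=
  (Finset.univ.filter fun c => v c ≠ 0).card

/-- `popcount j`: the number of ones in the binary representation of `j`. -/
def popcount (j : ℕ) : ℕ := (Nat.bits j).count true

/-- Bits of `c - 2^ℓ` when bit `ℓ` of `c` is set: bit `ℓ` is cleared, others unchanged. -/
lemma testBit_sub_two_pow {c ℓ : ℕ} (h : c.testBit ℓ = true) (i : ℕ) :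
    (c - 2 ^ ℓ).testBit i = (!decide (i = ℓ) && c.testBit i) := by
  have h5 : c / 2 ^ ℓ % 2 = 1 := by
    have := @Nat.testBit_eq_decide_div_mod_eq ℓ c
    rw [h] at this; exact (decide_eq_true_eq.mp this.symm)
  have hpos : 0 < 2 ^ ℓ := Nat.two_pow_pos _
  have h1 : c % 2 ^ ℓ < 2 ^ ℓ := Nat.mod_lt _ hpos
  have h2 : 2 ^ ℓ * (c / 2 ^ ℓ) + c % 2 ^ ℓ = c := Nat.div_add_mod c (2 ^ ℓ)
  have h3 : 2 * (c / 2 ^ ℓ / 2) + c / 2 ^ ℓ % 2 = c / 2 ^ ℓ := Nat.div_add_mod _ 2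
  set a := c % 2 ^ ℓ with ha
  set b := c / 2 ^ ℓ / 2 with hb
  have hc : c = a + 2 ^ ℓ * (2 * b) + 2 ^ ℓ := by nlinarith [h2, h3, h5]
  have hd : c - 2 ^ ℓ = a + 2 ^ ℓ * (2 * b) := by omega
  rcases lt_trichotomy i ℓ with hi | hi | hi
  · have e1 : (c - 2 ^ ℓ) % 2 ^ ℓ = a := by
      rw [hd, Nat.add_mul_mod_self_left, Nat.mod_eq_of_lt h1]
    have t1 := Nat.testBit_mod_two_pow (c - 2 ^ ℓ) ℓ i
    have t2 := Nat.testBit_mod_two_pow c ℓ i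
    rw [e1] at t1
    rw [← ha] at t2
    rw [decide_eq_true hi, Bool.true_and] at t1 t2
    rw [← t1, t2, decide_eq_false (by omega : ¬ i = ℓ)]
    simp
  · subst hi
    have e1 : (c - 2 ^ i) / 2 ^ i = 2 * b := by
      rw [hd, Nat.add_mul_div_left _ _ hpos, Nat.div_eq_of_lt h1, Nat.zero_add]
    rw [Nat.testBit_eq_decide_div_mod_eq, e1]
    simp [Nat.mul_mod_right]
  · have hsplit : 2 ^ (ℓ + 1) * 2 ^ (i - ℓ - 1) = 2 ^ i := by
      rw [← pow_add]; congr 1; omega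
    have hpos' : 0 < 2 ^ (ℓ + 1) := Nat.two_pow_pos _
    have hlt : 2 ^ ℓ < 2 ^ (ℓ + 1) := by rw [pow_succ]; omega
    have hd' : c - 2 ^ ℓ = a + 2 ^ (ℓ + 1) * b := by rw [hd, pow_succ]; ring
    have hc' : c = (a + 2 ^ ℓ) + 2 ^ (ℓ + 1) * b := by rw [hc, pow_succ]; ring
    have e1 : (c - 2 ^ ℓ) / 2 ^ (ℓ + 1) = b := by
      rw [hd', Nat.add_mul_div_left _ _ hpos', Nat.div_eq_of_lt (by omega), Nat.zero_add]
    have e2 : c / 2 ^ (ℓ + 1) = b := by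
      conv_lhs => rw [hc']
      rw [Nat.add_mul_div_left _ _ hpos', Nat.div_eq_of_lt (by omega), Nat.zero_add]
    have key : (c - 2 ^ ℓ) / 2 ^ i = c / 2 ^ i := by
      rw [← hsplit, ← Nat.div_div_eq_div_mul, ← Nat.div_div_eq_div_mul, e1, e2]
    rw [decide_eq_false (by omega : ¬ i = ℓ)]
    simp [Nat.testBit_eq_decide_div_mod_eq, key]

/-- Product formula for the entries of the polar matrix. -/
lemma polarG_apply (n : ℕ) (j c : Fin (2 ^ n)) :
    polarG n j c =
      ∏ i ∈ Finset.range n,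
        (if (c : ℕ).testBit i && !(j : ℕ).testBit i then (0 : ZMod 2) else 1) := by
  induction n with
  | zero =>
    have : j = c := Subsingleton.elim (α := Fin 1) j c
    subst this
    simp [polarG, Matrix.one_apply_eq]
  | succ n ih =>
    have hdj : (j : ℕ) / 2 ^ n < 2 := Nat.div_lt_of_lt_mul (by
      have := j.isLt; have h := pow_succ 2 n; omega)
    have hdc : (c : ℕ) / 2 ^ n < 2 := Nat.div_lt_of_lt_mul (by
      have := c.isLt; have h := pow_succ 2 n; omega)
    have hmj : (j : ℕ) % 2 ^ n < 2 ^ n := Nat.mod_lt _ (Nat.two_pow_pos _)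
    have hmc : (c : ℕ) % 2 ^ n < 2 ^ n := Nat.mod_lt _ (Nat.two_pow_pos _)
    have key : polarG (n+1) j c =
        polarKernel ⟨(j : ℕ) / 2 ^ n, hdj⟩ ⟨(c : ℕ) / 2 ^ n, hdc⟩ *
          polarG n ⟨(j : ℕ) % 2 ^ n, hmj⟩ ⟨(c : ℕ) % 2 ^ n, hmc⟩ := by
      simp [polarG, Matrix.reindex_apply, Matrix.submatrix_apply, finProdFinEquiv,
        Matrix.kroneckerMap_apply, Fin.divNat, Fin.modNat]
    rw [key, ih, Finset.prod_range_succ, mul_comm]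
    congr 1
    · refine Finset.prod_congr rfl fun i hi => ?_
      rw [Finset.mem_range] at hi
      have : ((c : ℕ) % 2 ^ n).testBit i = (c : ℕ).testBit i := by
        rw [Nat.testBit_mod_two_pow, decide_eq_true hi, Bool.true_and]
      have hj' : ((j : ℕ) % 2 ^ n).testBit i = (j : ℕ).testBit i := by
        rw [Nat.testBit_mod_two_pow, decide_eq_true hi, Bool.true_and]
      rw [this, hj']
    · have tj : (j : ℕ).testBit n = decide ((j : ℕ) / 2 ^ n = 1) := by
        rw [Nat.testBit_eq_decide_div_mod_eq, Nat.mod_eq_of_lt hdj]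
      have tc : (c : ℕ).testBit n = decide ((c : ℕ) / 2 ^ n = 1) := by
        rw [Nat.testBit_eq_decide_div_mod_eq, Nat.mod_eq_of_lt hdc]
      rw [tj, tc]
      interval_cases h1 : (j : ℕ) / 2 ^ n <;> interval_cases h2 : (c : ℕ) / 2 ^ n <;>
        simp [polarKernel]

/-- single-position projection property of the polar matrix entries. -/
theorem polar_entry_projection (n ℓ : ℕ) (hℓ : ℓ < n) (j c : Fin (2 ^ n)) :
    ((c : ℕ).testBit ℓ = true → (j : ℕ).testBit ℓ = false → polarG n j c = 0) ∧
    ((c : ℕ).testBit ℓ = true → (j : ℕ).testBit ℓ = true →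
      polarG n j c = polarG n j ⟨(c : ℕ) - 2 ^ ℓ, lt_of_le_of_lt (Nat.sub_le _ _) c.isLt⟩) ∧
    ((c : ℕ).testBit ℓ = false →
      polarG n j c = polarG n
        ⟨(j : ℕ) ^^^ 2 ^ ℓ,
          Nat.xor_lt_two_pow j.isLt (Nat.pow_lt_pow_right one_lt_two hℓ)⟩ c) := by
  refine ⟨fun hc hj => ?_, fun hc hj => ?_, fun hc => ?_⟩
  · rw [polarG_apply]
    refine Finset.prod_eq_zero (Finset.mem_range.mpr hℓ) ?_
    simp [hc, hj]
  · rw [polarG_apply, polarG_apply]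
    refine Finset.prod_congr rfl fun i hi => ?_
    simp only []
    rw [testBit_sub_two_pow hc i]
    by_cases hiℓ : i = ℓ
    · subst hiℓ; simp [hc, hj]
    · simp [hiℓ]
  · rw [polarG_apply, polarG_apply]
    refine Finset.prod_congr rfl fun i hi => ?_
    simp only []
    rw [Nat.testBit_xor, Nat.testBit_two_pow]
    by_cases hiℓ : i = ℓ
    · subst hiℓ; simp [hc]
    · rw [decide_eq_false (fun h => hiℓ h.symm)]; simp
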